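/- Let k be a perfect field, K a finite Galois extension of k with Galois group Γ = Gal(K/k), and F/K an algebraic function field of one variable with full constant field K, viewed as an extension of k(x) for some x ∈ F transcendental over K. Assume the extension F/k(x) is Galois with Galois group 𝒢, and let G = Gal(F/K(x)), so that Γ ≅ 𝒢/G. If 𝒢 is the semidirect product G ⋊ Γ, i.e. the exact sequence 1 → G → 𝒢 → Γ → 1 admits a group-theoretic section s : Γ → 𝒢, then the descent of the definition field of F from K to k is possible; moreover the fixed field F' = F^{s(Γ)} is a finite extension of k(x) with full constant field k satisfying F ≅ F' ⊗_k K as k-algebras. -/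

import Mathlib

open IntermediateField

set_option maxHeartbeats 2000000
set_option synthInstance.maxHeartbeats 400000

/-- Auxiliary: if `F/K(x)` is finite and `K/k` is finite, then `F/k(x)` is finite. -/
lemma stmt0_auxFin (k K F : Type) [Field k] [Field K] [Field F]
    [Algebra k K] [Algebra k F] [Algebra K F] [IsScalarTower k K F]
    [FiniteDimensional k K] (x : F)
    (hFfin : FiniteDimensional (↥(adjoin K {x})) F) :
    FiniteDimensional (↥(adjoin k {x})) F := by
  set kx := adjoin k {x} with hkx
  set KxK := adjoin K {x} with hKxK
  have h1 : kx ≤ KxK.restrictScalars k := by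
    rw [hkx, adjoin_le_iff, Set.singleton_subset_iff]
    show x ∈ KxK
    exact mem_adjoin_simple_self K x
  set E2 := extendScalars h1 with hE2
  let b := Module.finBasis k K
  set S : Set F := Set.range (fun i => algebraMap K F (b i)) with hS
  have hSint : ∀ y ∈ S, IsIntegral (↥kx) y := by
    rintro y ⟨i, rfl⟩
    have h0 : IsIntegral k (b i) := IsIntegral.of_finite k _
    have h2 : IsIntegral k ((IsScalarTower.toAlgHom k K F) (b i)) := h0.map _
    exact h2.tower_top
  have finS : FiniteDimensional (↥kx) (↥(adjoin (↥kx) S)) :=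
    finiteDimensional_adjoin hSint
  have hmemS : ∀ c : K, algebraMap K F c ∈ adjoin (↥kx) S := by
    intro c
    have hc : (algebraMap K F) c = ∑ i, algebraMap k F (b.repr c i) * algebraMap K F (b i) := by
      conv_lhs => rw [← b.sum_repr c]
      rw [map_sum]
      refine Finset.sum_congr rfl fun i _ => ?_
      rw [Algebra.smul_def, map_mul, ← IsScalarTower.algebraMap_apply]
    rw [hc]
    refine Subalgebra.sum_mem _ fun i _ => mul_mem ?_ ?_
    · have h3 : algebraMap k F (b.repr c i) ∈ kx := kx.algebraMap_mem _
      have h4 := (adjoin (↥kx) S).algebraMap_mem ⟨_, h3⟩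
      simpa using h4
    · exact subset_adjoin _ _ ⟨i, rfl⟩
  have hadj : adjoin (↥kx) S = E2 := by
    apply le_antisymm
    · rw [adjoin_le_iff]
      rintro y ⟨i, rfl⟩
      show algebraMap K F (b i) ∈ KxK
      exact KxK.algebraMap_mem _
    · rw [hE2, extendScalars_le_iff]
      intro y hy
      show y ∈ adjoin (↥kx) S
      have hxmem : x ∈ adjoin (↥kx) S := by
        have h5 : algebraMap (↥kx) F ⟨x, mem_adjoin_simple_self k x⟩ ∈ adjoin (↥kx) S :=
          (adjoin (↥kx) S).algebraMap_mem _
        simpa using h5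
      let T : IntermediateField K F :=
        Subfield.toIntermediateField (adjoin (↥kx) S).toSubfield hmemS
      have hle : KxK ≤ T := by
        rw [hKxK, adjoin_le_iff, Set.singleton_subset_iff]
        exact hxmem
      exact hle hy
  have fin1 : FiniteDimensional (↥kx) (↥E2) := hadj ▸ finS
  have fin2 : FiniteDimensional (↥E2) F := hFfin
  exact Module.Finite.trans (↥E2) F

/-- Let `k` be a perfect field, `K/k` a finite Galois extension with
Galois group `Γ = K ≃ₐ[k] K`, and `F/K` an algebraic function field of one variable
(`x ∈ F` transcendental over `K`, `F/K(x)` finite) with full constant field `K`.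
If `F/k(x)` is Galois and the restriction map `Gal(F/k(x)) → Γ` admits a group-theoretic
section `s` (i.e. `𝒢 = G ⋊ Γ`), then the fixed field `F' = F^{s(Γ)}` is a finite
extension of `k(x)` with full constant field `k` and `F ≅ F' ⊗_k K` as `k`-algebras. -/
theorem stmt_0
    (k K F : Type) [Field k] [Field K] [Field F]
    [Algebra k K] [Algebra k F] [Algebra K F] [IsScalarTower k K F]
    [PerfectField k] [FiniteDimensional k K] [IsGalois k K]
    (x : F) (hx : Transcendental K x)
    (hFfin : FiniteDimensional (↥(adjoin K {x})) F)
    (hconstF : ∀ y : F, IsAlgebraic K y → ∃ c : K, algebraMap K F c = y)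
    [IsGalois (↥(adjoin k {x})) F]
    (s : (K ≃ₐ[k] K) →* (F ≃ₐ[↥(adjoin k {x})] F))
    (hs : ∀ (σ : K ≃ₐ[k] K) (c : K), s σ (algebraMap K F c) = algebraMap K F (σ c)) :
    FiniteDimensional (↥(adjoin k {x})) (↥(fixedField (MonoidHom.range s))) ∧
    (∀ y : F, y ∈ fixedField (MonoidHom.range s) → IsAlgebraic k y →
      ∃ c : k, algebraMap k F c = y) ∧
    Nonempty (F ≃ₐ[k] TensorProduct k (↥(fixedField (MonoidHom.range s))) K) := by
  classical
  haveI hFinkx : FiniteDimensional (↥(adjoin k {x})) F := stmt0_auxFin k K F x hFfin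
  refine ⟨inferInstance, ?_, ?_⟩
  · -- part 2 : full constant field of F' is k
    intro y hy halg
    have halgK : IsAlgebraic K y := halg.tower_top K
    obtain ⟨c, hc⟩ := hconstF y halgK
    have hfix : ∀ σ : K ≃ₐ[k] K, σ c = c := by
      intro σ
      have h1 : s σ y = y := hy ⟨s σ, ⟨σ, rfl⟩⟩
      have h2 : algebraMap K F (σ c) = algebraMap K F c := by
        rw [← hs σ c, hc, h1]
      exact (algebraMap K F).injective h2
    have hcbot : c ∈ (⊥ : IntermediateField k K) := by
      have htop : fixedField (⊤ : Subgroup (K ≃ₐ[k] K)) ≤ (⊥ : IntermediateField k K) := by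
        have h3 : fixingSubgroup (⊥ : IntermediateField k K) = ⊤ := by
          rw [eq_top_iff]
          intro g _
          rw [IntermediateField.mem_fixingSubgroup_iff]
          intro z hz
          rw [IntermediateField.mem_bot] at hz
          obtain ⟨z0, rfl⟩ := hz
          exact g.commutes z0
        conv_rhs => rw [← IsGalois.fixedField_fixingSubgroup (⊥ : IntermediateField k K)]
        rw [h3]
      exact htop (fun g => hfix g)
    rw [IntermediateField.mem_bot] at hcbot
    obtain ⟨c0, rfl⟩ := hcbot
    exact ⟨c0, by rw [← hc, ← IsScalarTower.algebraMap_apply]⟩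
  · -- part 3 : F ≅ F' ⊗ₖ K
    have hsinj : Function.Injective s := by
      rw [injective_iff_map_eq_one]
      intro σ hσ
      ext c
      have h1 := hs σ c
      rw [hσ] at h1
      simpa using ((algebraMap K F).injective h1.symm)
    haveI : FiniteDimensional (↥(fixedField (MonoidHom.range s))) F := inferInstance
    haveI : IsScalarTower k (↥(fixedField (MonoidHom.range s))) F :=
      IsScalarTower.of_algebraMap_eq (fun a => rfl)
    have hcard : Module.finrank (↥(fixedField (MonoidHom.range s))) F =
        Module.finrank k K := by
      have h5 := IntermediateField.finrank_fixedField_eq_card (H := MonoidHom.range s)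
      have h6 := IsGalois.card_aut_eq_finrank k K
      rw [h5, ← h6]
      exact Nat.card_congr (MonoidHom.ofInjective hsinj).toEquiv.symm
    have hE : adjoin (↥(fixedField (MonoidHom.range s))) (Set.range (algebraMap K F)) = ⊤ := by
      have hN : (adjoin (↥(fixedField (MonoidHom.range s)))
          (Set.range (algebraMap K F))).restrictScalars (↥(adjoin k {x})) = ⊤ := by
        have hfs : fixingSubgroup ((adjoin (↥(fixedField (MonoidHom.range s)))
            (Set.range (algebraMap K F))).restrictScalars (↥(adjoin k {x}))) = ⊥ := by
          rw [eq_bot_iff]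
          intro σ hσ
          rw [IntermediateField.mem_fixingSubgroup_iff] at hσ
          have hσH : σ ∈ MonoidHom.range s := by
            rw [← IntermediateField.fixingSubgroup_fixedField (MonoidHom.range s),
              IntermediateField.mem_fixingSubgroup_iff]
            intro y hy
            refine hσ y ?_
            show y ∈ adjoin (↥(fixedField (MonoidHom.range s))) (Set.range (algebraMap K F))
            have h7 : algebraMap (↥(fixedField (MonoidHom.range s))) F ⟨y, hy⟩ ∈
                adjoin (↥(fixedField (MonoidHom.range s))) (Set.range (algebraMap K F)) :=
              IntermediateField.algebraMap_mem _ _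
            simpa using h7
          obtain ⟨τ, hτ⟩ := hσH
          have hτ1 : τ = 1 := by
            ext c
            have h1 : σ (algebraMap K F c) = algebraMap K F c := by
              refine hσ _ ?_
              show algebraMap K F c ∈
                adjoin (↥(fixedField (MonoidHom.range s))) (Set.range (algebraMap K F))
              exact subset_adjoin _ _ ⟨c, rfl⟩
            rw [← hτ, hs τ c] at h1
            simpa using (algebraMap K F).injective h1
          rw [Subgroup.mem_bot, ← hτ, hτ1, map_one]
        have h4 := IsGalois.fixedField_fixingSubgroup
          ((adjoin (↥(fixedField (MonoidHom.range s)))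
            (Set.range (algebraMap K F))).restrictScalars (↥(adjoin k {x})))
        rw [hfs] at h4
        rw [← h4, eq_top_iff]
        intro y _ g
        obtain ⟨g, hg⟩ := g
        rw [Subgroup.mem_bot] at hg
        subst hg
        rfl
      rw [eq_top_iff]
      intro y _
      have h8 : y ∈ (adjoin (↥(fixedField (MonoidHom.range s)))
          (Set.range (algebraMap K F))).restrictScalars (↥(adjoin k {x})) := by
        rw [hN]; trivial
      exact h8
    have halgS : ∀ y ∈ Set.range (algebraMap K F),
        IsAlgebraic (↥(fixedField (MonoidHom.range s))) y := by
      rintro y ⟨c, rfl⟩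
      have h0 : IsIntegral k c := IsIntegral.of_finite k c
      have h1 : IsIntegral k ((IsScalarTower.toAlgHom k K F) c) := h0.map _
      exact (h1.tower_top (A := ↥(fixedField (MonoidHom.range s)))).isAlgebraic
    set Ψ : TensorProduct k (↥(fixedField (MonoidHom.range s))) K
        →ₐ[↥(fixedField (MonoidHom.range s))] F :=
      Algebra.TensorProduct.lift (Algebra.ofId _ F) (IsScalarTower.toAlgHom k K F)
        (fun _ _ => Commute.all _ _) with hΨ
    have hsurj : Function.Surjective Ψ := by
      rw [← AlgHom.range_eq_top, eq_top_iff]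
      have h2 : Algebra.adjoin (↥(fixedField (MonoidHom.range s)))
          (Set.range (algebraMap K F)) = ⊤ := by
        have h3 := IntermediateField.adjoin_toSubalgebra_of_isAlgebraic halgS
        rw [hE] at h3
        rw [← h3]
        rfl
      rw [← h2, Algebra.adjoin_le_iff]
      rintro y ⟨c, rfl⟩
      exact ⟨1 ⊗ₜ c, by simp [hΨ, Algebra.TensorProduct.lift_tmul]⟩
    haveI : FiniteDimensional (↥(fixedField (MonoidHom.range s)))
        (TensorProduct k (↥(fixedField (MonoidHom.range s))) K) := inferInstance
    have hinj : Function.Injective Ψ := by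
      have hfr : Module.finrank (↥(fixedField (MonoidHom.range s)))
          (TensorProduct k (↥(fixedField (MonoidHom.range s))) K) =
          Module.finrank (↥(fixedField (MonoidHom.range s))) F := by
        rw [Module.finrank_baseChange, hcard]
      exact (LinearMap.injective_iff_surjective_of_finrank_eq_finrank hfr
        (f := Ψ.toLinearMap)).mpr hsurj
    exact ⟨((AlgEquiv.ofBijective Ψ ⟨hinj, hsurj⟩).restrictScalars k).symm⟩
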